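/- Fix an integer b ≥ 1 and Z ≥ 1, and let ε = 4Z³−1. Consider the graph G_Z with elite E a clique on ε vertices (with self-loops) and periphery P consisting of 2bZ·ε isolated vertices (with self-loops), where every elite vertex has 2bZ³ edges to the periphery and every periphery vertex has Z² edges to the elite. Then I(E,E) = 2Z³(4Z³−1), I(E,P) = 2bZ³(4Z³−1), I(P,P) = 2bZ(4Z³−1), and the partition (E,P) satisfies dominance with c_d = 1 (I(E,P) ≥ I(P,P)) and robustness with c_r = 1/b (I(E,E) = I(E,P)/b). -/

import Mathlib

/-- In the purely elitistic graph G_Z (elite: clique on ε = 4Z³−1 vertices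
with self-loops; periphery: 2bZ·ε isolated vertices with self-loops; every
elite vertex has 2bZ³ edges to the periphery and every periphery vertex has
Z² edges to the elite): I(E,E) = ε(ε+1)/2 = 2Z³(4Z³−1),
I(E,P) = Z²·|P| = 2bZ³(4Z³−1), I(P,P) = |P| = 2bZ(4Z³−1), and (E,P)
satisfies dominance with c_d = 1 and robustness with c_r = 1/b. -/
theorem stmt15 (b Z : ℕ) (hb : 1 ≤ b) (hZ : 1 ≤ Z) :
    (4 * Z ^ 3 - 1) * ((4 * Z ^ 3 - 1) + 1) / 2 = 2 * Z ^ 3 * (4 * Z ^ 3 - 1) ∧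
    Z ^ 2 * (2 * b * Z * (4 * Z ^ 3 - 1)) = 2 * b * Z ^ 3 * (4 * Z ^ 3 - 1) ∧
    2 * b * Z * (4 * Z ^ 3 - 1) ≤ Z ^ 2 * (2 * b * Z * (4 * Z ^ 3 - 1)) ∧
    b * ((4 * Z ^ 3 - 1) * ((4 * Z ^ 3 - 1) + 1) / 2) =
      Z ^ 2 * (2 * b * Z * (4 * Z ^ 3 - 1)) := by
  have hz3 : 1 ≤ Z ^ 3 := Nat.one_le_pow _ _ hZ
  have h1 : 1 ≤ 4 * Z ^ 3 := by omega
  have hsub : (4 * Z ^ 3 - 1) + 1 = 4 * Z ^ 3 := Nat.sub_add_cancel h1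
  have hEE : (4 * Z ^ 3 - 1) * ((4 * Z ^ 3 - 1) + 1) / 2 = 2 * Z ^ 3 * (4 * Z ^ 3 - 1) := by
    rw [hsub, show (4 * Z ^ 3 - 1) * (4 * Z ^ 3) = (4 * Z ^ 3 - 1) * (2 * Z ^ 3) * 2 by ring,
      Nat.mul_div_cancel _ (by norm_num), Nat.mul_comm]
  refine ⟨hEE, by ring, ?_, ?_⟩
  · exact Nat.le_mul_of_pos_left _ (Nat.pow_pos hZ)
  · rw [hEE]; ring
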